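/- (Failure of the central limit theorem for the heavy-tailed state; core of Proposition 4.8(c).) Let μ be the Borel probability measure on ℝ with density x ↦ (1/2)·(1 + x²)^{−3/2} with respect to Lebesgue measure, and let φ_μ(t) := ∫_ℝ e^{itx} dμ(x) be its characteristic function. Then for every real t ≠ 0, lim_{n→∞} (φ_μ(t/√n))^n = 0. -/

import Mathlib

open MeasureTheory Filter Real
open scoped NNReal ENNReal

noncomputable section

/-- The heavy-tailed probability measure on `ℝ` with density
`x ↦ (1/2)·(1 + x²)^{−3/2}`, the position distribution of the state of
Proposition 4.8. -/
def heavyTailedMeasure : Measure ℝ :=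
  (volume : Measure ℝ).withDensity
    (fun x => ENNReal.ofReal ((1 / 2) * (1 + x ^ 2) ^ (-(3 / 2) : ℝ)))

/-- The characteristic function `φ_μ(t) = ∫ e^{itx} dμ(x)` of the heavy-tailed
measure. -/
def heavyTailedCharFun (t : ℝ) : ℂ :=
  ∫ x, Complex.exp (Complex.I * (t * x)) ∂heavyTailedMeasure

namespace HT

/-- The density of the heavy-tailed measure. -/
def g (x : ℝ) : ℝ := (1 / 2) * (1 + x ^ 2) ^ (-(3 / 2) : ℝ)

lemma base_pos (x : ℝ) : (0:ℝ) < 1 + x ^ 2 := by positivity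

lemma g_nonneg (x : ℝ) : 0 ≤ g x := by
  unfold g; positivity

lemma g_cont : Continuous g := by
  unfold g
  exact continuous_const.mul ((continuous_const.add (continuous_pow 2)).rpow_const
    (fun x => Or.inl (base_pos x).ne'))

lemma g_le (x : ℝ) : g x ≤ (1/2) * (1 + x ^ 2)⁻¹ := by
  have h1 : (1:ℝ) ≤ 1 + x ^ 2 := by nlinarith [sq_nonneg x]
  have : (1 + x ^ 2) ^ (-(3/2) : ℝ) ≤ (1 + x ^ 2) ^ (-1 : ℝ) :=
    Real.rpow_le_rpow_of_exponent_le h1 (by norm_num)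
  rw [Real.rpow_neg_one] at this
  unfold g; nlinarith

lemma g_integrable : Integrable g := by
  refine (integrable_inv_one_add_sq.const_mul (1/2)).mono (g_cont.aestronglyMeasurable) ?_
  filter_upwards with x
  rw [Real.norm_eq_abs, Real.norm_eq_abs, abs_of_nonneg (g_nonneg x)]
  calc g x ≤ (1/2) * (1 + x^2)⁻¹ := g_le x
  _ ≤ |(1/2) * (1 + x^2)⁻¹| := le_abs_self _

lemma g_even (x : ℝ) : g (-x) = g x := by unfold g; rw [neg_pow x 2]; ring_nf

/-- Antiderivative of `g`. -/
def F (x : ℝ) : ℝ := (1/2) * (x / Real.sqrt (1 + x ^ 2))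

lemma rpow_eq (x : ℝ) : (1 + x ^ 2) ^ (-(3/2) : ℝ)
    = ((1 + x ^ 2) * Real.sqrt (1 + x ^ 2))⁻¹ := by
  have h := base_pos x
  rw [Real.rpow_neg h.le]
  congr 1
  rw [show (3/2:ℝ) = 1 + 1/2 by norm_num, Real.rpow_add h, Real.rpow_one, Real.sqrt_eq_rpow]

lemma hasDerivAt_F (x : ℝ) : HasDerivAt F (g x) x := by
  have h := base_pos x
  have hs : Real.sqrt (1 + x ^ 2) > 0 := Real.sqrt_pos.mpr h
  have hsq : Real.sqrt (1 + x ^ 2) ^ 2 = 1 + x ^ 2 := Real.sq_sqrt h.le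
  have h1 : HasDerivAt (fun y : ℝ => 1 + y ^ 2) (2 * x) x := by
    simpa using (hasDerivAt_pow 2 x).const_add 1
  have h2 : HasDerivAt (fun y : ℝ => Real.sqrt (1 + y ^ 2))
      (1 / (2 * Real.sqrt (1 + x ^ 2)) * (2 * x)) x :=
    (Real.hasDerivAt_sqrt h.ne').comp x h1
  have h3 : HasDerivAt (fun y : ℝ => y / Real.sqrt (1 + y ^ 2))
      ((1 * Real.sqrt (1 + x ^ 2) - x * (1 / (2 * Real.sqrt (1 + x ^ 2)) * (2 * x)))
        / (Real.sqrt (1 + x ^ 2)) ^ 2) x :=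
    (hasDerivAt_id x).div h2 hs.ne'
  have h4 := h3.const_mul (1/2 : ℝ)
  refine h4.congr_deriv ?_
  unfold g
  rw [rpow_eq]
  set s := Real.sqrt (1 + x ^ 2) with hsdef
  field_simp
  linear_combination x ^ 2 * hsq

lemma F_top : Tendsto F atTop (nhds (1/2)) := by
  have key : Tendsto (fun x : ℝ => (1/2) * Real.sqrt (1 - (1 + x ^ 2)⁻¹)) atTop
      (nhds (1/2)) := by
    have h1 : Tendsto (fun x : ℝ => 1 + x ^ 2) atTop atTop := by
      apply tendsto_atTop_add_const_left
      exact tendsto_pow_atTop (by norm_num)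
    have h2 : Tendsto (fun x : ℝ => 1 - (1 + x ^ 2)⁻¹) atTop (nhds 1) := by
      simpa using tendsto_const_nhds.sub h1.inv_tendsto_atTop
    have := ((Real.continuous_sqrt.tendsto 1).comp h2).const_mul (1/2 : ℝ)
    simpa [Function.comp_def] using this
  refine key.congr' ?_
  filter_upwards [eventually_gt_atTop (0:ℝ)] with x hx
  unfold F
  congr 1
  have h := base_pos x
  rw [show (1 : ℝ) - (1 + x ^ 2)⁻¹ = x ^ 2 / (1 + x ^ 2) by field_simp; ring]
  rw [Real.sqrt_div (sq_nonneg x), Real.sqrt_sq hx.le]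

lemma F_bot : Tendsto F atBot (nhds (-(1/2))) := by
  have hodd : ∀ x, F x = -(F (-x)) := by
    intro x; unfold F; rw [neg_pow x 2]; ring
  have : Tendsto (fun x => -(F (-x))) atBot (nhds (-(1/2))) :=
    (F_top.comp tendsto_neg_atBot_atTop).neg
  exact this.congr (fun x => (hodd x).symm)

lemma integral_g : ∫ x, g x = 1 := by
  rw [integral_of_hasDerivAt_of_tendsto hasDerivAt_F g_integrable F_bot F_top]
  norm_num

lemma integrable_cos (s : ℝ) : Integrable (fun x => Real.cos (s * x) * g x) := by
  refine g_integrable.mono ((Real.continuous_cos.comp (continuous_const.mul continuous_id)).mul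
    g_cont).aestronglyMeasurable ?_
  filter_upwards with x
  rw [Real.norm_eq_abs, Real.norm_eq_abs, abs_mul, abs_of_nonneg (g_nonneg x)]
  exact mul_le_of_le_one_left (g_nonneg x) (Real.abs_cos_le_one _)

lemma integrable_sin (s : ℝ) : Integrable (fun x => Real.sin (s * x) * g x) := by
  refine g_integrable.mono ((Real.continuous_sin.comp (continuous_const.mul continuous_id)).mul
    g_cont).aestronglyMeasurable ?_
  filter_upwards with x
  rw [Real.norm_eq_abs, Real.norm_eq_abs, abs_mul, abs_of_nonneg (g_nonneg x)]
  exact mul_le_of_le_one_left (g_nonneg x) (Real.abs_sin_le_one _)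

lemma integral_sin_zero (s : ℝ) : ∫ x, Real.sin (s * x) * g x = 0 := by
  have h := integral_neg_eq_self (fun x => Real.sin (s * x) * g x) (volume : Measure ℝ)
  have h2 : ∫ x, Real.sin (s * -x) * g (-x) = -∫ x, Real.sin (s * x) * g x := by
    rw [← integral_neg]
    congr 1 with x
    rw [g_even, mul_neg, Real.sin_neg]; ring
  rw [h2] at h
  linarith

/-- The real characteristic function of the heavy-tailed measure. -/
def φ (s : ℝ) : ℝ := ∫ x, Real.cos (s * x) * g x

lemma charFun_eq (s : ℝ) : heavyTailedCharFun s = ((φ s : ℝ) : ℂ) := by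
  have hmeas : Measurable (fun x : ℝ => Real.toNNReal (g x)) :=
    measurable_real_toNNReal.comp g_cont.measurable
  have hμ : heavyTailedMeasure
      = (volume : Measure ℝ).withDensity (fun x => ((Real.toNNReal (g x) : ℝ≥0) : ℝ≥0∞)) := rfl
  rw [heavyTailedCharFun, hμ, integral_withDensity_eq_integral_smul hmeas]
  have hrw : ∀ x : ℝ, (Real.toNNReal (g x)) • Complex.exp (Complex.I * (s * x))
      = ((Real.cos (s * x) * g x : ℝ) : ℂ) + ((Real.sin (s * x) * g x : ℝ) : ℂ) * Complex.I := by
    intro x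
    have : Complex.I * ((s : ℂ) * (x : ℂ)) = ((s * x : ℝ) : ℂ) * Complex.I := by
      push_cast; ring
    rw [this, Complex.exp_mul_I, NNReal.smul_def, Real.coe_toNNReal _ (g_nonneg x),
      Complex.real_smul, ← Complex.ofReal_cos, ← Complex.ofReal_sin]
    push_cast
    ring
  simp_rw [hrw]
  have h1 : Integrable (fun x => ((Real.cos (s * x) * g x : ℝ) : ℂ)) :=
    (integrable_cos s).ofReal
  have h2 : Integrable (fun x => ((Real.sin (s * x) * g x : ℝ) : ℂ) * Complex.I) :=
    ((integrable_sin s).ofReal).mul_const _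
  rw [integral_add h1 h2, integral_mul_const]
  have e1 : ∫ x : ℝ, ((Real.cos (s * x) * g x : ℝ) : ℂ) = ((φ s : ℝ) : ℂ) := integral_ofReal
  have e2 : (∫ x : ℝ, ((Real.sin (s * x) * g x : ℝ) : ℂ))
      = (((∫ x : ℝ, Real.sin (s * x) * g x : ℝ)) : ℂ) := integral_ofReal
  rw [integral_sin_zero] at e2
  rw [e1, e2]
  simp

lemma integrable_one_sub_cos (s : ℝ) :
    Integrable (fun x => (1 - Real.cos (s * x)) * g x) := by
  have : (fun x => (1 - Real.cos (s * x)) * g x)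
      = fun x => g x - Real.cos (s * x) * g x := by funext x; ring
  rw [this]
  exact g_integrable.sub (integrable_cos s)

lemma one_sub_φ (s : ℝ) : 1 - φ s = ∫ x, (1 - Real.cos (s * x)) * g x := by
  have h : (1:ℝ) - φ s = (∫ x, g x) - ∫ x, Real.cos (s * x) * g x := by rw [integral_g, φ]
  rw [h, ← integral_sub g_integrable (integrable_cos s)]
  congr 1 with x; ring

lemma sqrt2_le : Real.sqrt 2 ≤ 1.5 := by
  nlinarith [Real.sq_sqrt (by norm_num : (0:ℝ) ≤ 2), Real.sqrt_nonneg 2]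

lemma g_lower {x : ℝ} (hx : 1 ≤ x) :
    (2 * Real.sqrt 2 * x ^ 3)⁻¹ / 2 ≤ g x := by
  have hx0 : (0:ℝ) < x := lt_of_lt_of_le one_pos hx
  have h1 : (1:ℝ) + x ^ 2 ≤ 2 * x ^ 2 := by nlinarith
  have h2 : (2 * x ^ 2 : ℝ) ^ (-(3/2) : ℝ) ≤ (1 + x ^ 2) ^ (-(3/2) : ℝ) :=
    Real.rpow_le_rpow_of_nonpos (base_pos x) h1 (by norm_num)
  have h3 : (2 * x ^ 2 : ℝ) ^ (-(3/2) : ℝ) = (2 * Real.sqrt 2 * x ^ 3)⁻¹ := by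
    rw [Real.rpow_neg (by positivity)]
    congr 1
    rw [Real.mul_rpow (by norm_num) (by positivity)]
    have e1 : (2:ℝ) ^ ((3:ℝ)/2) = 2 * Real.sqrt 2 := by
      rw [show (3/2:ℝ) = 1 + 1/2 by norm_num, Real.rpow_add (by norm_num), Real.rpow_one,
        Real.sqrt_eq_rpow]
    have e2 : (x ^ 2 : ℝ) ^ ((3:ℝ)/2) = x ^ 3 := by
      rw [← Real.rpow_natCast x 2, ← Real.rpow_mul hx0.le]
      norm_num
    rw [e1, e2]
  unfold g
  rw [← h3]
  nlinarith [h2]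

lemma key {s : ℝ} (h0 : 0 < s) (h1 : s ≤ 1) :
    s ^ 2 * Real.log s⁻¹ / 32 ≤ 1 - φ s := by
  have hsinv : (1:ℝ) ≤ s⁻¹ := (one_le_inv₀ h0).mpr h1
  set A := Set.Ioc (1:ℝ) s⁻¹ with hA
  have hAm : MeasurableSet A := measurableSet_Ioc
  have hpt : ∀ x ∈ A, s ^ 2 * x⁻¹ / 32 ≤ (1 - Real.cos (s * x)) * g x := by
    rintro x ⟨hx1, hx2⟩
    have hx0 : (0:ℝ) < x := lt_trans one_pos hx1
    have hsx : s * x ≤ 1 := by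
      calc s * x ≤ s * s⁻¹ := by apply mul_le_mul_of_nonneg_left hx2 h0.le
      _ = 1 := mul_inv_cancel₀ h0.ne'
    have hsx0 : 0 < s * x := mul_pos h0 hx0
    have hcos : Real.cos (s * x) ≤ 1 - 2 / π ^ 2 * (s * x) ^ 2 := by
      apply Real.cos_le_one_sub_mul_cos_sq
      rw [abs_of_pos hsx0]
      linarith [Real.pi_gt_three]
    have hg := g_lower hx1.le
    have hπ : (0:ℝ) < π := Real.pi_pos
    have hπ' : π < 3.15 := Real.pi_lt_d2
    have hs2 := sqrt2_le
    have hs2' : (1:ℝ) ≤ Real.sqrt 2 := by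
      nlinarith [Real.sq_sqrt (by norm_num : (0:ℝ) ≤ 2), Real.sqrt_nonneg 2]
    have step1 : 2 / π ^ 2 * (s * x) ^ 2 ≤ 1 - Real.cos (s * x) := by linarith
    have hgq : 0 ≤ g x := g_nonneg x
    have e : 2 / π ^ 2 * (s * x) ^ 2 * ((2 * Real.sqrt 2 * x ^ 3)⁻¹ / 2)
        = s ^ 2 * x⁻¹ / (2 * Real.sqrt 2 * π ^ 2) := by
      field_simp
    have hmul : 2 / π ^ 2 * (s * x) ^ 2 * ((2 * Real.sqrt 2 * x ^ 3)⁻¹ / 2)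
        ≤ (1 - Real.cos (s * x)) * g x := by
      apply mul_le_mul step1 hg (by positivity)
      nlinarith [Real.cos_le_one (s * x)]
    rw [e] at hmul
    refine le_trans ?_ hmul
    have hc : 2 * Real.sqrt 2 * π ^ 2 ≤ 32 := by nlinarith
    have hpos : (0:ℝ) ≤ s ^ 2 * x⁻¹ := by positivity
    rw [div_le_div_iff₀ (by norm_num) (by positivity), mul_comm]
    calc 2 * Real.sqrt 2 * π ^ 2 * (s ^ 2 * x⁻¹) ≤ 32 * (s ^ 2 * x⁻¹) :=
        mul_le_mul_of_nonneg_right hc hpos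
      _ = s ^ 2 * x⁻¹ * 32 := by ring
  have hInt := integrable_one_sub_cos s
  have hnn : 0 ≤ᵐ[volume] fun x => (1 - Real.cos (s * x)) * g x := by
    filter_upwards with x
    simp only [Pi.zero_apply]
    exact mul_nonneg (by linarith [Real.cos_le_one (s * x)]) (g_nonneg x)
  have step1 : ∫ x in A, (1 - Real.cos (s * x)) * g x ≤ ∫ x, (1 - Real.cos (s * x)) * g x :=
    setIntegral_le_integral hInt hnn
  have hI1 : IntegrableOn (fun x : ℝ => s ^ 2 * x⁻¹ / 32) A := by
    apply IntegrableOn.mono_set _ Set.Ioc_subset_Icc_self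
    apply ContinuousOn.integrableOn_Icc
    apply ContinuousOn.div_const
    apply ContinuousOn.mul continuousOn_const
    exact ContinuousOn.inv₀ continuousOn_id
      (fun x hx => by rcases hx with ⟨hx1, _⟩; exact (lt_of_lt_of_le one_pos hx1).ne')
  have step2 : ∫ x in A, s ^ 2 * x⁻¹ / 32 ≤ ∫ x in A, (1 - Real.cos (s * x)) * g x :=
    setIntegral_mono_on hI1 hInt.integrableOn hAm hpt
  have step3 : ∫ x in A, s ^ 2 * x⁻¹ / 32 = s ^ 2 * Real.log s⁻¹ / 32 := by
    have : ∀ x : ℝ, s ^ 2 * x⁻¹ / 32 = (s ^ 2 / 32) * x⁻¹ := fun x => by ring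
    simp_rw [this]
    rw [integral_const_mul]
    have : ∫ x in A, x⁻¹ = Real.log s⁻¹ := by
      rw [hA, ← intervalIntegral.integral_of_le hsinv, integral_inv_of_pos one_pos
        (lt_of_lt_of_le one_pos hsinv), div_one]
    rw [this]; ring
  rw [one_sub_φ]
  linarith [step1, step2, step3.symm.le]

lemma φ_cont : Continuous φ := by
  apply continuous_of_dominated (bound := g)
  · exact fun s => (integrable_cos s).aestronglyMeasurable
  · intro s
    filter_upwards with x
    rw [Real.norm_eq_abs, abs_mul, abs_of_nonneg (g_nonneg x)]
    exact mul_le_of_le_one_left (g_nonneg x) (Real.abs_cos_le_one _)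
  · exact g_integrable
  · filter_upwards with x
    exact (Real.continuous_cos.comp (continuous_id.mul continuous_const)).mul continuous_const

lemma φ_zero : φ 0 = 1 := by
  rw [φ]
  simp only [zero_mul, Real.cos_zero, one_mul]
  exact integral_g

lemma φ_le_one (s : ℝ) : φ s ≤ 1 := by
  rw [φ, ← integral_g]
  apply integral_mono (integrable_cos s) g_integrable
  intro x
  exact mul_le_of_le_one_left (g_nonneg x) (Real.cos_le_one _)

lemma φ_abs (s : ℝ) : φ |s| = φ s := by
  rcases abs_choice s with h | h
  · rw [h]
  · rw [h, φ, φ]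
    congr 1 with x
    rw [neg_mul, Real.cos_neg]

lemma main_real (t : ℝ) (ht : t ≠ 0) :
    Tendsto (fun n : ℕ => (φ (t / Real.sqrt n)) ^ n) atTop (nhds 0) := by
  have hat : (0:ℝ) < |t| := abs_pos.mpr ht
  set u : ℕ → ℝ := fun n => |t| / Real.sqrt n with hu
  have hsqrtR : Tendsto (fun x : ℝ => Real.sqrt x) atTop atTop := by
    apply tendsto_atTop_atTop.mpr
    intro b
    refine ⟨max 0 b ^ 2, fun a ha => ?_⟩
    have h0 : (0:ℝ) ≤ max 0 b := le_max_left _ _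
    have h := Real.sqrt_le_sqrt ha
    rw [Real.sqrt_sq h0] at h
    exact le_trans (le_max_right 0 b) h
  have hsqrt : Tendsto (fun n : ℕ => Real.sqrt n) atTop atTop :=
    hsqrtR.comp tendsto_natCast_atTop_atTop
  have hu0 : Tendsto u atTop (nhds 0) := by
    have h := hsqrt.inv_tendsto_atTop
    have h2 : Tendsto (fun n : ℕ => |t| * (Real.sqrt n)⁻¹) atTop (nhds (|t| * 0)) := by
      apply Tendsto.const_mul
      simpa [Pi.inv_def] using h
    rw [mul_zero] at h2
    exact h2.congr (fun n => by rw [hu]; ring)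
  have hφu : Tendsto (fun n => φ (u n)) atTop (nhds 1) := by
    have := (φ_cont.tendsto 0).comp hu0
    rwa [φ_zero] at this
  set b : ℕ → ℝ := fun n => Real.exp (-(t ^ 2 * Real.log (Real.sqrt n / |t|) / 32)) with hb
  have hbound : ∀ᶠ n : ℕ in atTop, (φ (t / Real.sqrt n)) ^ n ≤ b n := by
    have e1 : ∀ᶠ n : ℕ in atTop, 1/2 < φ (u n) := hφu.eventually (eventually_gt_nhds (by norm_num))
    have e2 : ∀ᶠ n : ℕ in atTop, u n ≤ 1 := hu0.eventually (eventually_le_nhds (by norm_num))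
    have e3 : ∀ᶠ n : ℕ in atTop, 1 ≤ n := eventually_ge_atTop 1
    filter_upwards [e1, e2, e3] with n h1 h2 h3
    have hn0 : (0:ℝ) < n := by exact_mod_cast h3
    have hsn : 0 < Real.sqrt n := Real.sqrt_pos.mpr hn0
    have hun0 : 0 < u n := div_pos hat hsn
    have habs : |t / Real.sqrt n| = u n := by
      rw [hu, abs_div, abs_of_pos hsn]
    have hφeq : φ (t / Real.sqrt n) = φ (u n) := by rw [← φ_abs (t / Real.sqrt n), habs]
    have hk := key hun0 h2
    set a := 1 - φ (u n) with ha
    have ha0 : 0 ≤ a := by linarith [φ_le_one (u n)]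
    have ha1 : 0 ≤ 1 - a := by rw [ha]; linarith
    have hexp : (1 - a) ≤ Real.exp (-a) := by
      have := Real.add_one_le_exp (-a); linarith
    have hφa : φ (u n) = 1 - a := by rw [ha]; ring
    have hpow : (φ (u n)) ^ n ≤ Real.exp (-a) ^ n := by
      rw [hφa]
      exact pow_le_pow_left₀ ha1 hexp n
    rw [← Real.exp_nat_mul] at hpow
    have huv : u n ^ 2 = t ^ 2 / n := by
      rw [hu, div_pow, Real.sq_sqrt hn0.le, sq_abs]
    have huinv : (u n)⁻¹ = Real.sqrt n / |t| := by
      rw [hu, inv_div]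
    have hna : t ^ 2 * Real.log (Real.sqrt n / |t|) / 32 ≤ n * a := by
      have := mul_le_mul_of_nonneg_left hk (le_of_lt hn0)
      calc t ^ 2 * Real.log (Real.sqrt n / |t|) / 32
          = (n:ℝ) * (u n ^ 2 * Real.log (u n)⁻¹ / 32) := by
            rw [huv, huinv]; field_simp
        _ ≤ (n:ℝ) * a := this
    have : Real.exp ((n:ℝ) * -a) ≤ b n := by
      rw [hb]
      apply Real.exp_le_exp.mpr
      have e : (n:ℝ) * -a = -((n:ℝ) * a) := by ring
      rw [e]
      linarith [hna]
    rw [hφeq]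
    exact le_trans hpow this
  have hlow : ∀ᶠ n : ℕ in atTop, (0:ℝ) ≤ (φ (t / Real.sqrt n)) ^ n := by
    have e1 : ∀ᶠ n : ℕ in atTop, 1/2 < φ (u n) := hφu.eventually (eventually_gt_nhds (by norm_num))
    have e3 : ∀ᶠ n : ℕ in atTop, 1 ≤ n := eventually_ge_atTop 1
    filter_upwards [e1, e3] with n h1 h3
    have hn0 : (0:ℝ) < n := by exact_mod_cast h3
    have hsn : 0 < Real.sqrt n := Real.sqrt_pos.mpr hn0
    have habs : |t / Real.sqrt n| = u n := by rw [hu, abs_div, abs_of_pos hsn]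
    have hφeq : φ (t / Real.sqrt n) = φ (u n) := by rw [← φ_abs (t / Real.sqrt n), habs]
    rw [hφeq]
    positivity
  have hb0 : Tendsto b atTop (nhds 0) := by
    have hlog : Tendsto (fun n : ℕ => Real.log (Real.sqrt n / |t|)) atTop atTop :=
      Real.tendsto_log_atTop.comp (hsqrt.atTop_div_const hat)
    have hc : (0:ℝ) < t ^ 2 / 32 := by positivity
    have hexp : Tendsto (fun n : ℕ => -(t ^ 2 * Real.log (Real.sqrt n / |t|) / 32)) atTop atBot := by
      apply tendsto_neg_atTop_atBot.comp
      have := hlog.const_mul_atTop hc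
      refine this.congr (fun n => by ring)
    exact Real.tendsto_exp_atBot.comp hexp
  exact tendsto_of_tendsto_of_tendsto_of_le_of_le' tendsto_const_nhds hb0 hlow hbound

end HT

/-- Failure of the central limit theorem for the heavy-tailed state (core of
Proposition 4.8(c)): for every `t ≠ 0`, `(φ_μ(t/√n))ⁿ → 0` as `n → ∞`. -/
theorem heavyTailed_clt_failure (t : ℝ) (ht : t ≠ 0) :
    Tendsto (fun n : ℕ => (heavyTailedCharFun (t / Real.sqrt n)) ^ n)
      atTop (nhds 0) := by
  have h := HT.main_real t ht
  have heq : (fun n : ℕ => (heavyTailedCharFun (t / Real.sqrt n)) ^ n)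
      = fun n : ℕ => (((HT.φ (t / Real.sqrt n)) ^ n : ℝ) : ℂ) := by
    funext n
    rw [HT.charFun_eq]
    push_cast
    ring
  rw [heq]
  have := (Complex.continuous_ofReal.tendsto 0).comp h
  simpa [Function.comp_def] using this
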